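/- arXiv:2407.12751 — 2 statements merged into one kernel-verified Lean document; each statement's English description precedes it below -/
import Mathlib

section
/- For the subsampled gradient with control variates, the pseudo-variance bound holds: E‖ξ‖² ≤ (N²/m)‖θ − θ̂‖² (1/N) Σ_{j=1}^N L_j², where ξ is the difference between the control-variate gradient estimator and the true gradient ∇log π(θ), assuming each ∇log π_j is L_j-Lipschitz. -/
open MeasureTheory ENNReal RealInnerProductSpace

lemma key_sum {E : Type*} [NormedAddCommGroup E] [InnerProductSpace ℝ E]
    {N : ℕ} (hN : 0 < N) (Z : Fin N → E) (hZ : ∑ j, Z j = 0) :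
    ∀ m : ℕ, ∑ c : Fin m → Fin N, ‖∑ k, Z (c k)‖ ^ 2
      = (m : ℝ) * (N : ℝ) ^ m / N * ∑ j, ‖Z j‖ ^ 2 := by
  have hN0 : (N : ℝ) ≠ 0 := Nat.cast_ne_zero.mpr hN.ne'
  intro m
  induction m with
  | zero => simp
  | succ m ih =>
    have h1 : ∑ c : Fin (m+1) → Fin N, ‖∑ k, Z (c k)‖ ^ 2
        = ∑ p : Fin N × (Fin m → Fin N), ‖Z p.1 + ∑ k, Z (p.2 k)‖ ^ 2 := by
      apply Fintype.sum_equiv (Fin.consEquiv (fun _ : Fin (m+1) => Fin N)).symm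
      intro c
      simp [Fin.sum_univ_succ, Fin.consEquiv, Fin.tail]
    rw [h1, Fintype.sum_prod_type]
    have h2 : ∀ (a : Fin N) (w : E), ‖Z a + w‖ ^ 2 = ‖Z a‖ ^ 2 + 2 * ⟪Z a, w⟫ + ‖w‖ ^ 2 :=
      fun a w => norm_add_sq_real _ _
    simp only [h2, Finset.sum_add_distrib]
    have hA : ∑ a : Fin N, ∑ _c : Fin m → Fin N, ‖Z a‖ ^ 2
        = (N : ℝ) ^ m * ∑ j, ‖Z j‖ ^ 2 := by
      simp [Finset.sum_const, Finset.mul_sum, mul_comm]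
    have hB : ∑ a : Fin N, ∑ c : Fin m → Fin N, 2 * ⟪Z a, ∑ k, Z (c k)⟫ = 0 := by
      rw [Finset.sum_comm]
      have : ∀ c : Fin m → Fin N, ∑ a : Fin N, 2 * ⟪Z a, ∑ k, Z (c k)⟫ = 0 := by
        intro c
        rw [← Finset.mul_sum, ← sum_inner, hZ, inner_zero_left, mul_zero]
      simp [this]
    have hC : ∑ _a : Fin N, ∑ c : Fin m → Fin N, ‖∑ k, Z (c k)‖ ^ 2
        = (N : ℝ) * (↑m * ↑N ^ m / ↑N * ∑ j, ‖Z j‖ ^ 2) := by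
      rw [Finset.sum_const]
      simp [ih, Finset.card_univ]
    rw [hA, hB, hC]
    push_cast
    field_simp
    ring

/-- Pseudo-variance bound for the subsampled gradient with control variates:
`E‖ξ‖² ≤ (N²/m)‖θ-θ̂‖² (1/N) Σ_j L_j²`, where `ξ` is the difference between
the control-variate gradient estimator (based on `m` indices drawn uniformly
with replacement) and the true gradient `∇log π(θ) = Σ_j ∇log π_j(θ)`, and
each `∇log π_j` is `L_j`-Lipschitz. -/
theorem stmt16 {Ω : Type*} [MeasurableSpace Ω] (P : Measure Ω) [IsProbabilityMeasure P]
    {d N m : ℕ} (hN : 0 < N) (hm : 0 < m)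
    (πj : Fin N → EuclideanSpace ℝ (Fin d) → ℝ) (hπ : ∀ j x, 0 < πj j x)
    (G : Fin N → EuclideanSpace ℝ (Fin d) → EuclideanSpace ℝ (Fin d))
    (hgrad : ∀ j x, HasGradientAt (fun y => Real.log (πj j y)) (G j x) x)
    (L : Fin N → ℝ)
    (hLip : ∀ j x y, ‖G j x - G j y‖ ≤ L j * ‖x - y‖)
    (θ θhat : EuclideanSpace ℝ (Fin d))
    (J : Fin m → Ω → Fin N) (hJmeas : ∀ k, Measurable (J k))
    (hiid : ∀ c : Fin m → Fin N, P {ω | ∀ k, J k ω = c k} = ((N : ℝ≥0∞))⁻¹ ^ m)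
    (ξ : Ω → EuclideanSpace ℝ (Fin d))
    (hξ : ∀ ω, ξ ω = (∑ j, G j θhat)
        + ((N : ℝ) / (m : ℝ)) • (∑ k, (G (J k ω) θ - G (J k ω) θhat))
        - ∑ j, G j θ) :
    ∫ ω, ‖ξ ω‖ ^ 2 ∂P ≤
      ((N : ℝ) ^ 2 / (m : ℝ)) * ‖θ - θhat‖ ^ 2 * ((1 / (N : ℝ)) * ∑ j, (L j) ^ 2) := by
  have hN0 : (N : ℝ) ≠ 0 := Nat.cast_ne_zero.mpr hN.ne'
  have hm0 : (m : ℝ) ≠ 0 := Nat.cast_ne_zero.mpr hm.ne'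
  set Y : Fin N → EuclideanSpace ℝ (Fin d) := fun j => G j θ - G j θhat with hYdef
  set μ : EuclideanSpace ℝ (Fin d) := (N : ℝ)⁻¹ • ∑ j, Y j with hμdef
  set Z : Fin N → EuclideanSpace ℝ (Fin d) := fun j => Y j - μ with hZdef
  have hNμ : (N : ℝ) • μ = ∑ j, Y j := smul_inv_smul₀ hN0 _
  have hsumZ : ∑ j, Z j = 0 := by
    rw [hZdef]
    simp only [Finset.sum_sub_distrib, Finset.sum_const, Finset.card_univ, Fintype.card_fin]
    rw [← Nat.cast_smul_eq_nsmul ℝ, hNμ, sub_self]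
  -- rewrite ξ
  have hξ' : ∀ ω, ξ ω = ((N : ℝ) / m) • ∑ k, Z (J k ω) := by
    intro ω
    rw [hξ ω, hZdef]
    simp only [Finset.sum_sub_distrib (f := fun k => Y (J k ω)), Finset.sum_const,
      Finset.card_univ, Fintype.card_fin, smul_sub]
    rw [← Nat.cast_smul_eq_nsmul ℝ, smul_smul, div_mul_cancel₀ _ hm0, hNμ]
    have : (∑ j, G j θhat) + ((N:ℝ)/m) • ∑ k, (G (J k ω) θ - G (J k ω) θhat) - ∑ j, G j θ
        = ((N:ℝ)/m) • ∑ k, Y (J k ω) - ∑ j, Y j := by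
      simp only [hYdef, Finset.sum_sub_distrib]
      abel
    rw [this]
  -- the partition sets
  set A : (Fin m → Fin N) → Set Ω := fun c => {ω | ∀ k, J k ω = c k} with hAdef
  have hAmeas : ∀ c, MeasurableSet (A c) := by
    intro c
    have : A c = ⋂ k, (J k) ⁻¹' {c k} := by
      ext ω; simp [hAdef, Set.mem_iInter]
    rw [this]
    exact MeasurableSet.iInter fun k => hJmeas k (measurableSet_singleton _)
  set h : (Fin m → Fin N) → ℝ := fun c => ((N : ℝ) / m) ^ 2 * ‖∑ k, Z (c k)‖ ^ 2 with hhdef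
  have hpoint : ∀ ω, ‖ξ ω‖ ^ 2 = ∑ c, (A c).indicator (fun _ => h c) ω := by
    intro ω
    rw [Finset.sum_eq_single (fun k => J k ω)]
    · rw [Set.indicator_of_mem (by intro k; rfl)]
      rw [hξ' ω, hhdef, norm_smul, mul_pow]
      norm_num [sq_abs]
    · intro c _ hc
      rw [Set.indicator_of_notMem]
      intro hmem
      exact hc (funext fun k => (hmem k).symm)
    · intro habs; exact absurd (Finset.mem_univ _) habs
  have hint : ∫ ω, ‖ξ ω‖ ^ 2 ∂P = ∑ c, ((N : ℝ)⁻¹) ^ m * h c := by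
    calc ∫ ω, ‖ξ ω‖ ^ 2 ∂P = ∫ ω, ∑ c, (A c).indicator (fun _ => h c) ω ∂P := by
          exact integral_congr_ae (Filter.Eventually.of_forall hpoint)
      _ = ∑ c, ∫ ω, (A c).indicator (fun _ => h c) ω ∂P :=
          integral_finset_sum _ (fun c _ => (integrable_const (h c)).indicator (hAmeas c))
      _ = ∑ c, (P (A c)).toReal • h c := by
          refine Finset.sum_congr rfl fun c _ => ?_
          rw [integral_indicator_const _ (hAmeas c)]
          rfl
      _ = ∑ c, ((N : ℝ)⁻¹) ^ m * h c := by
          refine Finset.sum_congr rfl fun c _ => ?_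
          rw [hiid c]
          simp [smul_eq_mul, ENNReal.toReal_pow, ENNReal.toReal_inv]
  rw [hint]
  -- compute the sum
  have hkey := key_sum hN Z hsumZ m
  rw [← Finset.mul_sum, hhdef]
  simp only
  rw [← Finset.mul_sum, hkey]
  -- now pure arithmetic + bound on ∑‖Z j‖²
  have hZbound : ∑ j, ‖Z j‖ ^ 2 ≤ ‖θ - θhat‖ ^ 2 * ∑ j, (L j) ^ 2 := by
    have h1 : ∑ j, ‖Z j‖ ^ 2 ≤ ∑ j, ‖Y j‖ ^ 2 := by
      have expand : ∀ j : Fin N, ‖Z j‖ ^ 2 = ‖Y j‖ ^ 2 - 2 * ⟪Y j, μ⟫ + ‖μ‖ ^ 2 := by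
        intro j; rw [hZdef]; exact norm_sub_sq_real _ _
      have hsum : ∑ j, ‖Z j‖ ^ 2 = ∑ j, ‖Y j‖ ^ 2 - (N : ℝ) * ‖μ‖ ^ 2 := by
        simp only [expand, Finset.sum_add_distrib, Finset.sum_sub_distrib, Finset.sum_const,
          Finset.card_univ, Fintype.card_fin]
        rw [← Finset.mul_sum, ← sum_inner, ← hNμ, real_inner_smul_left,
          real_inner_self_eq_norm_sq, ← Nat.cast_smul_eq_nsmul ℝ, smul_eq_mul]
        ring_nf
      rw [hsum]
      have : 0 ≤ (N : ℝ) * ‖μ‖ ^ 2 := by positivity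
      linarith
    refine h1.trans ?_
    rw [Finset.mul_sum]
    refine Finset.sum_le_sum fun j _ => ?_
    have := hLip j θ θhat
    calc ‖Y j‖ ^ 2 ≤ (L j * ‖θ - θhat‖) ^ 2 := by
          exact pow_le_pow_left₀ (norm_nonneg _) this 2
      _ = ‖θ - θhat‖ ^ 2 * (L j) ^ 2 := by ring
  calc ((N:ℝ)⁻¹) ^ m * (((N:ℝ)/m)^2 * ((m:ℝ) * (N:ℝ)^m / N * ∑ j, ‖Z j‖ ^ 2))
      = (N:ℝ) / m * ∑ j, ‖Z j‖ ^ 2 := by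
        field_simp
        rw [← mul_pow, one_div_mul_cancel hN0, one_pow, one_mul]
    _ ≤ (N:ℝ) / m * (‖θ - θhat‖ ^ 2 * ∑ j, (L j) ^ 2) := by
        apply mul_le_mul_of_nonneg_left hZbound
        positivity
    _ = ((N : ℝ) ^ 2 / (m : ℝ)) * ‖θ - θhat‖ ^ 2 * ((1 / (N : ℝ)) * ∑ j, (L j) ^ 2) := by
        field_simp
end

section
/- Stein's integration-by-parts identity: if g : ℝ^d → ℝ^d is a continuously differentiable vector field with πg ∈ L¹(ℝ^d) and ∇·(πg) ∈ L¹(ℝ^d), where π is a continuously differentiable probability density on ℝ^d, then ∫ [(∇·g)(x) + ⟨∇log π(x), g(x)⟩] π(x) dx = 0. -/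
open MeasureTheory Filter Topology Metric

set_option maxHeartbeats 1000000 in
lemma integral_div_eq_zero_aux {d : ℕ} {h : (Fin d → ℝ) → (Fin d → ℝ)}
    (hh : ContDiff ℝ 1 h) (hint : Integrable h)
    (hdiv : Integrable fun x => ∑ i, fderiv ℝ (fun y => h y i) x (Pi.single i 1)) :
    (∫ x, ∑ i, fderiv ℝ (fun y => h y i) x (Pi.single i 1)) = 0 := by
  have hhi : ∀ i, ContDiff ℝ 1 (fun y => h y i) := fun i => (contDiff_pi.mp hh i)
  set dv : (Fin d → ℝ) → ℝ := fun x => ∑ i, fderiv ℝ (fun y => h y i) x (Pi.single i 1) with hdv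
  have hdvc : Continuous dv := by
    apply continuous_finset_sum
    intro i _
    exact ((hhi i).continuous_fderiv (by simp)).clm_apply continuous_const
  -- bump function
  let f : ContDiffBump (0 : Fin d → ℝ) := ⟨1, 2, one_pos, one_lt_two⟩
  obtain ⟨C, hC⟩ := ((f.hasCompactSupport).fderiv ℝ).exists_bound_of_continuous
    ((f.contDiff (n := 1)).continuous_fderiv (by simp))
  have hC0 : 0 ≤ C := le_trans (norm_nonneg _) (hC 0)
  set c : ℕ → ℝ := fun m => ((m : ℝ) + 1)⁻¹ with hcdef
  have hcpos : ∀ m, 0 < c m := fun m => by positivity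
  set L : ℕ → (Fin d → ℝ) →L[ℝ] (Fin d → ℝ) :=
    fun m => c m • ContinuousLinearMap.id ℝ _ with hLdef
  set φ : ℕ → (Fin d → ℝ) → ℝ := fun m x => f (c m • x) with hφdef
  have hLapp : ∀ m x, L m x = c m • x := fun m x => rfl
  have hφL : ∀ m, φ m = (f : (Fin d → ℝ) → ℝ) ∘ (L m) := fun m => rfl
  have hφC1 : ∀ m, ContDiff ℝ 1 (φ m) := fun m =>
    (f.contDiff (n := 1)).comp (L m).contDiff
  have hφcs : ∀ m, HasCompactSupport (φ m) := by
    intro m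
    have := (f.hasCompactSupport).comp_homeomorph
      (Homeomorph.smul (Units.mk0 (c m) (hcpos m).ne'))
    exact this
  have hφd : ∀ m x, HasFDerivAt (φ m) ((fderiv ℝ f (c m • x)).comp (L m)) x := by
    intro m x
    have h1 : HasFDerivAt f (fderiv ℝ f (c m • x)) (L m x) :=
      (((f.contDiff (n := 1)).differentiable (by simp)) _).hasFDerivAt
    exact h1.comp x (L m).hasFDerivAt
  have hφfderiv : ∀ m x, fderiv ℝ (φ m) x = (fderiv ℝ f (c m • x)).comp (L m) :=
    fun m x => (hφd m x).fderiv
  have hLnorm : ∀ m, ‖L m‖ ≤ c m := by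
    intro m
    simp only [hLdef]
    refine le_trans (ContinuousLinearMap.opNorm_smul_le _ _) ?_
    rw [Real.norm_eq_abs, abs_of_pos (hcpos m)]
    calc c m * ‖ContinuousLinearMap.id ℝ (Fin d → ℝ)‖ ≤ c m * 1 := by
          gcongr
          · exact ContinuousLinearMap.norm_id_le
      _ = c m := mul_one _
  have hφnorm : ∀ m x, ‖fderiv ℝ (φ m) x‖ ≤ C * c m := by
    intro m x
    rw [hφfderiv]
    refine le_trans (ContinuousLinearMap.opNorm_comp_le _ _) ?_
    exact mul_le_mul (hC _) (hLnorm m) (norm_nonneg _) hC0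
  have hhic : ∀ i : Fin d, Continuous (fun x => h x i) := fun i => (hhi i).continuous
  have hdiφ : ∀ m (i : Fin d), Continuous (fun x => fderiv ℝ (φ m) x (Pi.single i 1)) :=
    fun m i => ((hφC1 m).continuous_fderiv (by simp)).clm_apply continuous_const
  have hdih : ∀ i : Fin d, Continuous (fun x => fderiv ℝ (fun y => h y i) x (Pi.single i 1)) :=
    fun i => ((hhi i).continuous_fderiv (by simp)).clm_apply continuous_const
  have int1 : ∀ m (i : Fin d),
      Integrable (fun x => fderiv ℝ (φ m) x (Pi.single i 1) * h x i) := by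
    intro m i
    exact Continuous.integrable_of_hasCompactSupport ((hdiφ m i).mul (hhic i))
      (((hφcs m).fderiv_apply ℝ (Pi.single i 1)).mul_right)
  have int2 : ∀ m (i : Fin d),
      Integrable (fun x => φ m x * fderiv ℝ (fun y => h y i) x (Pi.single i 1)) := by
    intro m i
    exact Continuous.integrable_of_hasCompactSupport ((hφC1 m).continuous.mul (hdih i))
      ((hφcs m).mul_right)
  have int3 : ∀ m (i : Fin d), Integrable (fun x => φ m x * h x i) := by
    intro m i
    exact Continuous.integrable_of_hasCompactSupport ((hφC1 m).continuous.mul (hhic i))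
      ((hφcs m).mul_right)
  have IBP : ∀ m (i : Fin d), (∫ x, φ m x * fderiv ℝ (fun y => h y i) x (Pi.single i 1))
      = - ∫ x, fderiv ℝ (φ m) x (Pi.single i 1) * h x i := fun m i =>
    integral_mul_fderiv_eq_neg_fderiv_mul_of_integrable (int1 m i) (int2 m i) (int3 m i)
      (fun x _ => (hφC1 m).differentiable (by simp) x) (fun x _ => (hhi i).differentiable (by simp) x)
  have hbasis : ∀ x : Fin d → ℝ, ∀ m,
      (∑ i, fderiv ℝ (φ m) x (Pi.single i 1) * h x i) = fderiv ℝ (φ m) x (h x) := by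
    intro x m
    have hx : h x = ∑ i, h x i • (Pi.single i 1 : Fin d → ℝ) := by
      ext j
      simp [Pi.single_apply]
    conv_rhs => rw [hx]
    rw [map_sum]
    refine Finset.sum_congr rfl (fun i _ => ?_)
    rw [_root_.map_smul, smul_eq_mul, mul_comm]
  have hAeq : ∀ m, (∫ x, φ m x * dv x) = - ∫ x, fderiv ℝ (φ m) x (h x) := by
    intro m
    calc (∫ x, φ m x * dv x)
        = ∑ i, ∫ x, φ m x * fderiv ℝ (fun y => h y i) x (Pi.single i 1) := by
          rw [← integral_finset_sum _ (fun i _ => int2 m i)]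
          refine integral_congr_ae (Filter.Eventually.of_forall (fun x => ?_))
          simp only [hdv, Finset.mul_sum]
      _ = ∑ i, - ∫ x, fderiv ℝ (φ m) x (Pi.single i 1) * h x i :=
          Finset.sum_congr rfl (fun i _ => IBP m i)
      _ = - ∑ i, ∫ x, fderiv ℝ (φ m) x (Pi.single i 1) * h x i := by
          rw [← Finset.sum_neg_distrib]
      _ = - ∫ x, ∑ i, fderiv ℝ (φ m) x (Pi.single i 1) * h x i := by
          rw [integral_finset_sum _ (fun i _ => int1 m i)]
      _ = - ∫ x, fderiv ℝ (φ m) x (h x) := by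
          congr 1
          exact integral_congr_ae (Filter.Eventually.of_forall (fun x => hbasis x m))
  have intD : ∀ m, Integrable (fun x => fderiv ℝ (φ m) x (h x)) := by
    intro m
    apply Continuous.integrable_of_hasCompactSupport
      (((hφC1 m).continuous_fderiv (by simp)).clm_apply hh.continuous)
    apply HasCompactSupport.mono' ((hφcs m).fderiv ℝ)
    intro x hx
    apply subset_closure
    intro h0
    apply hx
    simp only [Function.mem_support, ne_eq, not_not] at h0 ⊢
    rw [h0]
    simp
  have hbound : ∀ m, ‖∫ x, φ m x * dv x‖ ≤ C * c m * ∫ x, ‖h x‖ := by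
    intro m
    rw [hAeq m, norm_neg]
    calc ‖∫ x, fderiv ℝ (φ m) x (h x)‖ ≤ ∫ x, ‖fderiv ℝ (φ m) x (h x)‖ :=
          norm_integral_le_integral_norm _
      _ ≤ ∫ x, (C * c m) * ‖h x‖ := by
          apply integral_mono (intD m).norm (hint.norm.const_mul _)
          intro x
          calc ‖fderiv ℝ (φ m) x (h x)‖ ≤ ‖fderiv ℝ (φ m) x‖ * ‖h x‖ :=
                ContinuousLinearMap.le_opNorm _ _
            _ ≤ (C * c m) * ‖h x‖ :=
                mul_le_mul_of_nonneg_right (hφnorm m x) (norm_nonneg _)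
      _ = C * c m * ∫ x, ‖h x‖ := integral_const_mul _ _
  have hctend : Tendsto c atTop (𝓝 0) := by
    rw [hcdef]
    exact (tendsto_atTop_add_const_right _ 1 tendsto_natCast_atTop_atTop).inv_tendsto_atTop
  have hlim0 : Tendsto (fun m => ∫ x, φ m x * dv x) atTop (𝓝 0) := by
    apply squeeze_zero_norm hbound
    have := (hctend.const_mul C).mul_const (∫ x, ‖h x‖)
    simpa using this
  have hlim1 : Tendsto (fun m => ∫ x, φ m x * dv x) atTop (𝓝 (∫ x, dv x)) := by
    apply tendsto_integral_of_dominated_convergence (fun x => |dv x|)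
    · exact fun m => ((hφC1 m).continuous.mul hdvc).aestronglyMeasurable
    · exact hdiv.abs
    · intro m
      filter_upwards with x
      rw [Real.norm_eq_abs, abs_mul]
      calc |φ m x| * |dv x| ≤ 1 * |dv x| := by
            apply mul_le_mul_of_nonneg_right _ (abs_nonneg _)
            rw [abs_of_nonneg f.nonneg]
            exact f.le_one
        _ = |dv x| := one_mul _
    · filter_upwards with x
      have hev : ∀ᶠ m in atTop, φ m x * dv x = dv x := by
        filter_upwards [eventually_ge_atTop ⌈‖x‖⌉₊] with m hm
        have hφ1 : φ m x = 1 := by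
          apply f.one_of_mem_closedBall
          show c m • x ∈ Metric.closedBall 0 1
          rw [mem_closedBall_zero_iff, norm_smul, Real.norm_eq_abs, abs_of_pos (hcpos m)]
          have h1 : ‖x‖ ≤ (m : ℝ) + 1 := by
            calc ‖x‖ ≤ (⌈‖x‖⌉₊ : ℝ) := Nat.le_ceil _
              _ ≤ (m : ℝ) := Nat.cast_le.mpr hm
              _ ≤ (m : ℝ) + 1 := by linarith
          calc c m * ‖x‖ ≤ c m * ((m : ℝ) + 1) := by
                exact mul_le_mul_of_nonneg_left h1 (hcpos m).le
            _ = 1 := by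
                rw [hcdef]
                field_simp
        rw [hφ1, one_mul]
      exact Tendsto.congr' (Filter.EventuallyEq.symm hev) tendsto_const_nhds
  exact tendsto_nhds_unique hlim1 hlim0

/-- Stein's integration-by-parts identity: if `π` is a positive `C¹` probability
density on `ℝ^d` and `g` a `C¹` vector field with `πg ∈ L¹` and `∇·(πg) ∈ L¹`,
then `∫ [(∇·g)(x) + ⟨∇log π(x), g(x)⟩] π(x) dx = 0`. -/
theorem stmt19 {d : ℕ} (π : (Fin d → ℝ) → ℝ) (g : (Fin d → ℝ) → (Fin d → ℝ))
    (hπpos : ∀ x, 0 < π x) (hπ : ContDiff ℝ 1 π) (hg : ContDiff ℝ 1 g)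
    (hπint : (∫ x, π x) = 1)
    (hL1 : Integrable fun x => ‖π x • g x‖)
    (hdivL1 : Integrable fun x =>
      ∑ i, fderiv ℝ (fun y => π y * g y i) x (Pi.single i 1)) :
    (∫ x, ((∑ i, fderiv ℝ (fun y => g y i) x (Pi.single i 1))
        + ∑ i, fderiv ℝ (fun y => Real.log (π y)) x (Pi.single i 1) * g x i) * π x) = 0 := by
  have hπd : Differentiable ℝ π := hπ.differentiable (by simp)
  have hgi : ∀ i : Fin d, ContDiff ℝ 1 (fun y => g y i) := fun i => contDiff_pi.mp hg i
  have hhC : ContDiff ℝ 1 (fun x => π x • g x) := hπ.smul hg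
  have key : ∀ x, ((∑ i, fderiv ℝ (fun y => g y i) x (Pi.single i 1))
        + ∑ i, fderiv ℝ (fun y => Real.log (π y)) x (Pi.single i 1) * g x i) * π x
      = ∑ i, fderiv ℝ (fun y => π y * g y i) x (Pi.single i 1) := by
    intro x
    have hπx := (hπd x).hasFDerivAt
    have hlog : HasFDerivAt (fun y => Real.log (π y)) ((π x)⁻¹ • fderiv ℝ π x) x := by
      have := (Real.hasDerivAt_log (hπpos x).ne').comp_hasFDerivAt x hπx
      simpa [Function.comp_def] using this
    have hlogf : fderiv ℝ (fun y => Real.log (π y)) x = (π x)⁻¹ • fderiv ℝ π x := hlog.fderiv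
    have hmul : ∀ i : Fin d, fderiv ℝ (fun y => π y * g y i) x
        = π x • fderiv ℝ (fun y => g y i) x + g x i • fderiv ℝ π x := fun i =>
      fderiv_mul (hπd x) (((hgi i).differentiable (by simp)) x)
    rw [hlogf]
    simp only [hmul, ContinuousLinearMap.add_apply, ContinuousLinearMap.smul_apply, smul_eq_mul]
    rw [Finset.sum_add_distrib, add_mul, Finset.sum_mul, Finset.sum_mul]
    congr 1
    · exact Finset.sum_congr rfl fun i _ => by ring
    · refine Finset.sum_congr rfl fun i _ => ?_
      field_simp [(hπpos x).ne']
  rw [integral_congr_ae (Filter.Eventually.of_forall key)]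
  exact integral_div_eq_zero_aux hhC
    ((integrable_norm_iff hhC.continuous.aestronglyMeasurable).mp hL1) hdivL1
end
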